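/- arXiv:1105.5740 — 2 statements merged into one kernel-verified Lean document; each statement's English description precedes it below -/
import Mathlib

section
/- There is a set Ω̂₁ ⊂ Ω₀ with P(Ω̂₁) = 1 such that for every ω ∈ Ω̂₁ there exists a positive integer M(ω) with the property: for all n ≥ M(ω), all x ∈ P(ω) with |x|_∞ = n, and all unit vectors e ∈ Z^d, one has γ_e(T_x ω) ≤ n. (Equivalently, the events A_n := {γ_e∘T_x > n for some x ∈ P with |x|_∞ = n and some unit e} satisfy Σ_n P(A_n) < ∞, so only finitely many A_n occur, P-a.s.) -/
open MeasureTheory ProbabilityTheory Filter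
open scoped ENNReal Topology

namespace RWDPP

attribute [local instance] Classical.propDecidable


/-- Configuration space `Ω = {0,1}^{ℤ^d}`. -/
abbrev Cfg (d : ℕ) := (Fin d → ℤ) → Bool

/-- Canonical shift `T_y ω (x) = ω (x + y)`. -/
def shift (d : ℕ) (y : Fin d → ℤ) (ω : Cfg d) : Cfg d := fun x => ω (x + y)

/-- Embedding of `ℤ^d` into `ℝ^d` (with the Euclidean norm). -/
def toE (d : ℕ) (x : Fin d → ℤ) : EuclideanSpace ℝ (Fin d) := WithLp.toLp 2 (fun i => (x i : ℝ))

/-- Euclidean norm `|x|` of a lattice point. -/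
noncomputable def nrm (d : ℕ) (x : Fin d → ℤ) : ℝ := ‖toE d x‖

/-- Sup norm `|x|_∞` of a lattice point. -/
def nrmInf (d : ℕ) (x : Fin d → ℤ) : ℕ := Finset.univ.sup fun i => (x i).natAbs

/-- The `2d` unit vectors of `ℤ^d`. -/
def unitVecs (d : ℕ) : Set (Fin d → ℤ) :=
  {e | ∃ i : Fin d, e = Pi.single i 1 ∨ e = Pi.single i (-1)}

/-- `γ_e(ω) = inf {k ≥ 1 : ω(k e) = 1}`. -/
noncomputable def gamma (d : ℕ) (e : Fin d → ℤ) (ω : Cfg d) : ℕ :=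
  sInf {k : ℕ | 1 ≤ k ∧ ω ((k : ℤ) • e) = true}

/-- The nearest neighbor of `x` in direction `e`: `x + γ_e(T_x ω) e`. -/
noncomputable def nbr (d : ℕ) (ω : Cfg d) (x e : Fin d → ℤ) : Fin d → ℤ :=
  x + (gamma d e (shift d x ω) : ℤ) • e

/-- The set `N_x(ω)` of the `2d` nearest neighbors of `x`. -/
noncomputable def nbrs (d : ℕ) (ω : Cfg d) (x : Fin d → ℤ) : Set (Fin d → ℤ) :=
  {y | ∃ e ∈ unitVecs d, y = nbr d ω x e}

/-- `(p 0, …, p m)` is a `𝒫(ω)`-nearest neighbor path. -/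
def IsPath (d : ℕ) (ω : Cfg d) (p : ℕ → Fin d → ℤ) (m : ℕ) : Prop :=
  ω (p 0) = true ∧ ∀ k, 1 ≤ k → k ≤ m → p k ∈ nbrs d ω (p (k - 1))

/-- The event `Ω₀ = {ω : ω(0) = 1}`. -/
def Omega0 (d : ℕ) : Set (Cfg d) := {ω | ω 0 = true}

/-- The σ-field generated by the coordinates in `A`. -/
def coordSigma (d : ℕ) (A : Set (Fin d → ℤ)) : MeasurableSpace (Cfg d) :=
  MeasurableSpace.comap (fun ω (x : A) => ω x) inferInstance

/-- Assumptions (A1)–(A3) on the law `Q` of the discrete point process. -/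
structure Assumptions (d : ℕ) (Q : Measure (Cfg d)) : Prop where
  prob : IsProbabilityMeasure Q
  a1_pos : 0 < Q (Omega0 d)
  a1_lt : Q (Omega0 d) < 1
  a2 : ∃ ℓ : ℝ, 0 < ℓ ∧ ∀ A B : Set (Fin d → ℤ),
    (∀ x ∈ A, ∀ y ∈ B, ℓ ≤ nrm d (x - y)) →
      Indep (coordSigma d A) (coordSigma d B) Q
  a3 : ∀ y : Fin d → ℤ, MeasurePreserving (shift d y) Q Q

/-- The conditioned measure `P = Q(·|Ω₀)`. -/
noncomputable def condP (d : ℕ) (Q : Measure (Cfg d)) : Measure (Cfg d) := Q[|Omega0 d]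

/-- One-step transition probability of the RWDPP. -/
noncomputable def stepP (d : ℕ) (ω : Cfg d) (x y : Fin d → ℤ) : ℝ :=
  if y ∈ nbrs d ω x then 1 / (2 * d) else 0

/-- Discrete trajectory space. -/
abbrev Traj (d : ℕ) := ℕ → Fin d → ℤ

/-- `μ` is the family of quenched laws `P_ω^z` of the RWDPP in the environment `ω`:
`μ z` is a probability measure with `μ z (X₀ = z) = 1` under which `(X_n)` is the Markov
chain with transition probability `1/(2d)` to each nearest neighbor. -/
def IsQuenchedLaw (d : ℕ) (ω : Cfg d) (μ : (Fin d → ℤ) → Measure (Traj d)) : Prop :=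
  (∀ z, IsProbabilityMeasure (μ z)) ∧
  ∀ z, ω z = true → ∀ n : ℕ, ∀ x : Traj d,
    μ z {p | ∀ k ≤ n, p k = x k} =
      (if x 0 = z then 1 else 0) *
        ∏ k ∈ Finset.range n, ENNReal.ofReal (stepP d ω (x k) (x (k + 1)))

/-- `P(N_{t} - N_{s} = k)` for a rate-one Poisson process, `r = t - s`. -/
noncomputable def poissonProb (r : ℝ) (k : ℕ) : ℝ≥0∞ :=
  ENNReal.ofReal (Real.exp (-r) * r ^ k / (Nat.factorial k))

/-- `ν` is the law of (the path of) a rate-one Poisson process `(N_t)_{t ≥ 0}`. -/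
def IsPoissonPath (ν : Measure (ℝ → ℕ)) : Prop :=
  IsProbabilityMeasure ν ∧
  (∀ᵐ η ∂ν, Monotone η ∧ ∀ t : ℝ, t ≤ 0 → η t = 0) ∧
  ∀ m : ℕ, ∀ t : ℕ → ℝ, 0 ≤ t 0 → Monotone t → ∀ k : ℕ → ℕ,
    ν {η | ∀ i < m, η (t (i + 1)) - η (t i) = k i} =
      ∏ i ∈ Finset.range m, poissonProb (t (i + 1) - t i) (k i)

/-- The continuous-time walk `Y_t = X_{N_t}`, realized on the product of the trajectory
space of the discrete walk and the path space of the Poisson process. -/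
def Yt (d : ℕ) (q : Traj d × (ℝ → ℕ)) (t : ℝ) : Fin d → ℤ := q.1 (q.2 t)

/-- `τ_n = inf {t ≥ 0 : |Y_t - Y_0| ≥ n}`. -/
noncomputable def hitTime (d : ℕ) (n : ℕ) (q : Traj d × (ℝ → ℕ)) : ℝ :=
  sInf {t : ℝ | 0 ≤ t ∧ (n : ℝ) ≤ nrm d (Yt d q t - Yt d q 0)}

/-- `max_{x ∈ 𝒫(ω), |x| ≤ n} g x` (Euclidean balls). -/
noncomputable def maxOn (d : ℕ) (ω : Cfg d) (g : (Fin d → ℤ) → ℝ) (n : ℕ) : ℝ :=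
  sSup {r : ℝ | ∃ x, ω x = true ∧ nrm d x ≤ (n : ℝ) ∧ r = g x}

/-- `max_{x ∈ 𝒫(ω), |x|_∞ ≤ n} g x` (sup-norm boxes). -/
noncomputable def maxOnInf (d : ℕ) (ω : Cfg d) (g : (Fin d → ℤ) → ℝ) (n : ℕ) : ℝ :=
  sSup {r : ℝ | ∃ x, ω x = true ∧ nrmInf d x ≤ n ∧ r = g x}

/-- The `2d` unit vectors, as a finite set. -/
noncomputable def unitFinset (d : ℕ) : Finset (Fin d → ℤ) :=
  (Finset.univ.image fun i : Fin d => (Pi.single i 1 : Fin d → ℤ)) ∪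
    (Finset.univ.image fun i : Fin d => (Pi.single i (-1) : Fin d → ℤ))

/-- `x ↦ x + ψ x` is harmonic on `𝒫(ω)` for the RWDPP transition probability. -/
def IsHarmonicDeform (d : ℕ) (ω : Cfg d) (ψ : (Fin d → ℤ) → EuclideanSpace ℝ (Fin d)) : Prop :=
  ∀ x, ω x = true →
    (1 / (2 * (d : ℝ))) • ∑ e ∈ unitFinset d, (toE d (nbr d ω x e) + ψ (nbr d ω x e))
      = toE d x + ψ x

/-- `‖(χ(x,·) - χ(y,·)) 1{x ∈ 𝒫} 1{y ∈ N_x}‖_{L²(P)}²`. -/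
noncomputable def corrL2sq (d : ℕ) (P : Measure (Cfg d))
    (χ : (Fin d → ℤ) → Cfg d → EuclideanSpace ℝ (Fin d)) (x y : Fin d → ℤ) : ℝ≥0∞ :=
  ∫⁻ ω, ENNReal.ofReal
    (if ω x = true ∧ y ∈ nbrs d ω x then ‖χ x ω - χ y ω‖ ^ 2 else 0) ∂P

/-- Graph distance on `𝒫(ω)` (`⊤` if not connected). -/
noncomputable def graphDist (d : ℕ) (ω : Cfg d) (x y : Fin d → ℤ) : ℕ∞ :=
  sInf {m : ℕ∞ | ∃ k : ℕ, m = (k : ℕ∞) ∧ ∃ p : Traj d, p 0 = x ∧ p k = y ∧ IsPath d ω p k}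


section Helpers

open MeasureTheory ProbabilityTheory Filter

lemma meas_eval (d : ℕ) (y : Fin d → ℤ) (b : Bool) :
    MeasurableSet {ω : Cfg d | ω y = b} := by
  have h : {ω : Cfg d | ω y = b} = (fun ω : Cfg d => ω y) ⁻¹' {b} := rfl
  rw [h]
  exact measurable_pi_apply y (measurableSet_singleton b)

lemma coordSigma_meas (d : ℕ) (A : Set (Fin d → ℤ)) {y : Fin d → ℤ} (hy : y ∈ A) (b : Bool) :
    MeasurableSet[coordSigma d A] {ω : Cfg d | ω y = b} := by
  unfold coordSigma
  refine ⟨(fun g : A → Bool => g ⟨y, hy⟩) ⁻¹' {b},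
    measurable_pi_apply (⟨y, hy⟩ : A) (measurableSet_singleton b), rfl⟩

lemma nrm_smul_unit (d : ℕ) {e : Fin d → ℤ} (he : e ∈ unitVecs d) (c : ℤ) :
    nrm d (c • e) = |(c : ℝ)| := by
  obtain ⟨i, hi⟩ := he
  have key : ∀ s : ℤ, s = 1 ∨ s = -1 → nrm d (c • Pi.single i s) = |(c : ℝ)| := by
    intro s hs
    rw [nrm, EuclideanSpace.norm_eq]
    have h1 : ∀ j, ‖(toE d (c • Pi.single i s)) j‖ ^ 2 = if j = i then (c : ℝ) ^ 2 else 0 := by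
      intro j
      by_cases hj : j = i
      · subst hj
        have h2 : (toE d (c • Pi.single j s)) j = (c : ℝ) * (s : ℝ) := by
          simp [toE, Pi.single_apply]
        rw [h2, if_pos rfl]
        rcases hs with h | h <;> rw [h] <;> simp [Real.norm_eq_abs, sq_abs] <;> ring
      · have h2 : (toE d (c • Pi.single i s)) j = 0 := by
          simp [toE, Pi.single_apply, hj]
        rw [h2, if_neg hj]
        simp
    rw [Finset.sum_congr rfl (fun j _ => h1 j)]
    rw [Finset.sum_ite_eq' Finset.univ i (fun _ => (c : ℝ) ^ 2)]
    simp [Real.sqrt_sq_eq_abs]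
  rcases hi with h | h
  · rw [h]; exact key 1 (Or.inl rfl)
  · rw [h]; exact key (-1) (Or.inr rfl)

lemma Q_eval_false (d : ℕ) (Q : Measure (Cfg d)) (hQ : Assumptions d Q) (y : Fin d → ℤ) :
    Q {ω : Cfg d | ω y = false} = Q ((Omega0 d)ᶜ) := by
  have hset : {ω : Cfg d | ω y = false} = (shift d y) ⁻¹' ((Omega0 d)ᶜ) := by
    ext ω
    simp [shift, Omega0, Bool.not_eq_true]
  rw [hset]
  exact (hQ.a3 y).measure_preimage ((meas_eval d 0 true).compl.nullMeasurableSet)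

set_option maxHeartbeats 1000000 in
lemma spaced_bound (d : ℕ) (Q : Measure (Cfg d)) (hQ : Assumptions d Q) {l : ℝ}
    (hInd : ∀ A B : Set (Fin d → ℤ),
      (∀ x ∈ A, ∀ y ∈ B, l ≤ nrm d (x - y)) → Indep (coordSigma d A) (coordSigma d B) Q)
    {L : ℕ} (hL : l ≤ (L : ℝ)) {e : Fin d → ℤ} (he : e ∈ unitVecs d) (x : Fin d → ℤ)
    (m : ℕ) :
    Q (⋂ j ∈ Finset.Icc 1 m, {ω : Cfg d | ω (x + ((j * L : ℕ) : ℤ) • e) = false})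
      ≤ Q ((Omega0 d)ᶜ) ^ m := by
  haveI := hQ.prob
  induction m with
  | zero =>
    have h0 : Finset.Icc 1 0 = (∅ : Finset ℕ) := Finset.Icc_eq_empty (by omega)
    rw [h0]
    simp
  | succ m ih =>
    set y : ℕ → Fin d → ℤ := fun j => x + ((j * L : ℕ) : ℤ) • e with hy
    set A : Set (Fin d → ℤ) := y '' (Set.Icc 1 m) with hA
    set B : Set (Fin d → ℤ) := {y (m + 1)} with hB
    have hdist : ∀ a ∈ A, ∀ b ∈ B, l ≤ nrm d (a - b) := by
      rintro a ⟨j, hj, rfl⟩ b rfl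
      obtain ⟨hj1, hj2⟩ := hj
      have hsub : y j - y (m + 1) = (((j * L : ℕ) : ℤ) - (((m + 1) * L : ℕ) : ℤ)) • e := by
        simp only [hy]
        rw [sub_smul]
        abel
      rw [hsub, nrm_smul_unit d he]
      have hjm : (j : ℝ) ≤ (m : ℝ) := by exact_mod_cast hj2
      have hL0 : (0 : ℝ) ≤ (L : ℝ) := Nat.cast_nonneg L
      have habs : |(((((j * L : ℕ) : ℤ) - (((m + 1) * L : ℕ) : ℤ)) : ℤ) : ℝ)|
          = ((m : ℝ) + 1) * L - (j : ℝ) * L := by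
        push_cast
        rw [abs_sub_comm, abs_of_nonneg (by nlinarith)]
      rw [habs]
      nlinarith
    have hmul := (Indep_iff _ _ _).1 (hInd A B hdist)
    have hR : MeasurableSet[coordSigma d A]
        (⋂ j ∈ Finset.Icc 1 m, {ω : Cfg d | ω (y j) = false}) := by
      refine Finset.measurableSet_biInter _ (fun j hj => ?_)
      have hjA : y j ∈ A := ⟨j, by simpa using Finset.mem_Icc.1 hj, rfl⟩
      exact coordSigma_meas d A hjA false
    have hS : MeasurableSet[coordSigma d B] {ω : Cfg d | ω (y (m + 1)) = false} :=
      coordSigma_meas d B rfl false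
    have hins : Finset.Icc 1 (m + 1) = insert (m + 1) (Finset.Icc 1 m) :=
      (Finset.insert_Icc_right_eq_Icc_add_one (by omega)).symm
    rw [hins, Finset.set_biInter_insert]
    calc Q ({ω : Cfg d | ω (y (m + 1)) = false}
            ∩ ⋂ j ∈ Finset.Icc 1 m, {ω : Cfg d | ω (y j) = false})
        = Q ((⋂ j ∈ Finset.Icc 1 m, {ω : Cfg d | ω (y j) = false})
            ∩ {ω : Cfg d | ω (y (m + 1)) = false}) := by rw [Set.inter_comm]
      _ = Q (⋂ j ∈ Finset.Icc 1 m, {ω : Cfg d | ω (y j) = false})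
            * Q {ω : Cfg d | ω (y (m + 1)) = false} := hmul _ _ hR hS
      _ ≤ Q ((Omega0 d)ᶜ) ^ m * Q ((Omega0 d)ᶜ) := by
            exact mul_le_mul' ih (le_of_eq (Q_eval_false d Q hQ _))
      _ = Q ((Omega0 d)ᶜ) ^ (m + 1) := (pow_succ _ _).symm

/-- The box of lattice points with all coordinates in `[-n, n]`. -/
noncomputable def boxF (d n : ℕ) : Finset (Fin d → ℤ) :=
  Fintype.piFinset fun _ => Finset.Icc (-(n : ℤ)) (n : ℤ)

/-- The bad event at scale `n` for a fixed starting point and direction. -/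
def badE (d : ℕ) (x e : Fin d → ℤ) (n : ℕ) : Set (Cfg d) :=
  ⋂ k ∈ Finset.Icc 1 n, {ω : Cfg d | ω (x + (k : ℤ) • e) = false}

/-- The bad event at scale `n`. -/
noncomputable def badB (d n : ℕ) : Set (Cfg d) :=
  ⋃ x ∈ boxF d n, ⋃ e ∈ unitFinset d, badE d x e n

lemma mem_unitVecs_of_mem_unitFinset (d : ℕ) {e : Fin d → ℤ} (he : e ∈ unitFinset d) :
    e ∈ unitVecs d := by
  simp only [unitFinset, Finset.mem_union, Finset.mem_image, Finset.mem_univ, true_and] at he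
  rcases he with ⟨i, hi⟩ | ⟨i, hi⟩
  · exact ⟨i, Or.inl hi.symm⟩
  · exact ⟨i, Or.inr hi.symm⟩

lemma card_boxF (d n : ℕ) : (boxF d n).card = (2 * n + 1) ^ d := by
  rw [boxF, Fintype.card_piFinset]
  rw [Finset.prod_const, Int.card_Icc, Finset.card_univ, Fintype.card_fin]
  congr 1
  omega

lemma card_unitFinset_le (d : ℕ) : (unitFinset d).card ≤ 2 * d := by
  refine le_trans (Finset.card_union_le _ _) ?_
  have h1 := Finset.card_image_le (s := (Finset.univ : Finset (Fin d)))
    (f := fun i : Fin d => (Pi.single i 1 : Fin d → ℤ))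
  have h2 := Finset.card_image_le (s := (Finset.univ : Finset (Fin d)))
    (f := fun i : Fin d => (Pi.single i (-1) : Fin d → ℤ))
  simp only [Finset.card_univ, Fintype.card_fin] at h1 h2
  omega

set_option maxHeartbeats 1000000 in
lemma summable_aux (d L : ℕ) {r : ℝ} (hr0 : 0 < r) (hr1 : r < 1) (hL : 1 ≤ L) :
    Summable (fun n : ℕ =>
      ((((2 * n + 1) ^ d * (2 * d) : ℕ)) : ℝ) * (r⁻¹ * (r ^ ((L : ℝ)⁻¹)) ^ n)) := by
  set ρ : ℝ := r ^ ((L : ℝ)⁻¹) with hρdef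
  have hLpos : (0 : ℝ) < (L : ℝ) := by exact_mod_cast hL
  have hρ0 : 0 < ρ := Real.rpow_pos_of_pos hr0 _
  have hρ1 : ρ < 1 := Real.rpow_lt_one hr0.le hr1 (by positivity)
  have hs : Summable (fun n : ℕ => (n : ℝ) ^ d * ρ ^ n) :=
    summable_pow_mul_geometric_of_norm_lt_one d
      (by rw [Real.norm_eq_abs, abs_of_pos hρ0]; exact hρ1)
  have hs2 : Summable (fun n : ℕ => (((n + 1 : ℕ)) : ℝ) ^ d * ρ ^ (n + 1)) :=
    (summable_nat_add_iff 1).2 hs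
  have hs1 : Summable (fun n : ℕ => ((n : ℝ) + 1) ^ d * ρ ^ n) := by
    refine (hs2.mul_left ρ⁻¹).congr fun n => ?_
    rw [pow_succ]
    push_cast
    field_simp
  refine Summable.of_nonneg_of_le (fun n => ?_) (fun n => ?_)
    (hs1.mul_left ((2 * (d : ℝ)) * 3 ^ d * r⁻¹))
  · positivity
  · have hN : ((((2 * n + 1) ^ d * (2 * d) : ℕ)) : ℝ)
        ≤ (2 * (d : ℝ)) * (3 ^ d * ((n : ℝ) + 1) ^ d) := by
      push_cast
      have h1 : ((2 * (n : ℝ) + 1)) ^ d ≤ (3 * ((n : ℝ) + 1)) ^ d := by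
        apply pow_le_pow_left₀ (by positivity)
        linarith
      rw [mul_pow] at h1
      nlinarith [pow_nonneg (by positivity : (0:ℝ) ≤ 3 * ((n : ℝ) + 1)) d,
        pow_nonneg (by positivity : (0:ℝ) ≤ 2 * (n : ℝ) + 1) d]
    have hX : (0 : ℝ) ≤ r⁻¹ * ρ ^ n := by positivity
    calc ((((2 * n + 1) ^ d * (2 * d) : ℕ)) : ℝ) * (r⁻¹ * ρ ^ n)
        ≤ ((2 * (d : ℝ)) * (3 ^ d * ((n : ℝ) + 1) ^ d)) * (r⁻¹ * ρ ^ n) :=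
          mul_le_mul_of_nonneg_right hN hX
      _ = ((2 * (d : ℝ)) * 3 ^ d * r⁻¹) * (((n : ℝ) + 1) ^ d * ρ ^ n) := by ring

end Helpers

set_option maxHeartbeats 1000000 in
/-- There is a set `Ω̂₁ ⊆ Ω₀` of full `P`-measure such that for every
`ω ∈ Ω̂₁` there is `M(ω) ≥ 1` with: for all `n ≥ M(ω)`, all `x ∈ 𝒫(ω)` with `|x|_∞ = n`
and all unit vectors `e`, one has `γ_e(T_x ω) ≤ n` (i.e. there is a point of `𝒫(ω)` at
`x + k e` for some `1 ≤ k ≤ n`). -/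
theorem finite_neighbor_radius (d : ℕ) (hd : 1 ≤ d)
    (Q : Measure (Cfg d)) (hQ : Assumptions d Q) :
    ∃ Ωhat : Set (Cfg d), Ωhat ⊆ Omega0 d ∧ condP d Q Ωhat = 1 ∧
      ∀ ω ∈ Ωhat, ∃ M : ℕ, 1 ≤ M ∧ ∀ n : ℕ, M ≤ n →
        ∀ x : Fin d → ℤ, ω x = true → nrmInf d x = n →
          ∀ e ∈ unitVecs d, ∃ k : ℕ, 1 ≤ k ∧ k ≤ n ∧ ω (x + (k : ℤ) • e) = true := by
  classical
  haveI := hQ.prob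
  obtain ⟨l, hlpos, hInd⟩ := hQ.a2
  set L : ℕ := max 1 ⌈l⌉₊ with hLdef
  have hL1 : 1 ≤ L := le_max_left _ _
  have hLl : l ≤ (L : ℝ) :=
    (Nat.le_ceil l).trans (by exact_mod_cast Nat.cast_le.2 (le_max_right 1 ⌈l⌉₊))
  set qE : ℝ≥0∞ := Q ((Omega0 d)ᶜ) with hqEdef
  have hOmeas : MeasurableSet (Omega0 d) := meas_eval d 0 true
  have hcompl : qE = 1 - Q (Omega0 d) := by
    rw [hqEdef, measure_compl hOmeas (measure_ne_top Q _), measure_univ]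
  have hqElt : qE < 1 := by
    rw [hcompl]
    exact ENNReal.sub_lt_self ENNReal.one_ne_top one_ne_zero (ne_of_gt hQ.a1_pos)
  set q : ℝ := qE.toReal with hqdef
  have hqE_ne_top : qE ≠ ⊤ := measure_ne_top Q _
  have hofq : qE = ENNReal.ofReal q := (ENNReal.ofReal_toReal hqE_ne_top).symm
  have hq0 : 0 ≤ q := ENNReal.toReal_nonneg
  have hq1 : q < 1 := by
    have := (ENNReal.toReal_lt_toReal hqE_ne_top ENNReal.one_ne_top).mpr hqElt
    simpa using this
  set r : ℝ := max q (1 / 2) with hrdef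
  have hr0 : 0 < r := lt_of_lt_of_le (by norm_num) (le_max_right _ _)
  have hr1 : r < 1 := max_lt hq1 (by norm_num)
  have hqr : q ≤ r := le_max_left _ _
  set ρ : ℝ := r ^ ((L : ℝ)⁻¹) with hρdef
  have hLpos : (0 : ℝ) < (L : ℝ) := by exact_mod_cast hL1
  have hρ0 : 0 < ρ := Real.rpow_pos_of_pos hr0 _
  -- key pointwise power bound
  have hkey : ∀ n : ℕ, q ^ (n / L) ≤ r⁻¹ * ρ ^ n := by
    intro n
    have h1 : q ^ (n / L) ≤ r ^ (n / L) := pow_le_pow_left₀ hq0 hqr _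
    have h3 : (n : ℝ) / (L : ℝ) - 1 ≤ ((n / L : ℕ) : ℝ) := by
      have hmod : n = L * (n / L) + n % L := (Nat.div_add_mod n L).symm
      have hlt : n % L < L := Nat.mod_lt _ (by omega)
      have hlt' : (n : ℝ) < (L : ℝ) * ((n / L : ℕ) : ℝ) + (L : ℝ) := by
        have : (n : ℝ) = (L : ℝ) * ((n / L : ℕ) : ℝ) + ((n % L : ℕ) : ℝ) := by
          exact_mod_cast hmod
        rw [this]
        have : ((n % L : ℕ) : ℝ) < (L : ℝ) := by exact_mod_cast hlt
        linarith
      rw [sub_le_iff_le_add, div_le_iff₀ hLpos]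
      nlinarith
    have h4 : r ^ (((n / L : ℕ)) : ℝ) ≤ r ^ ((n : ℝ) / (L : ℝ) - 1) :=
      Real.rpow_le_rpow_of_exponent_ge hr0 hr1.le h3
    have h5 : r ^ ((n : ℝ) / (L : ℝ) - 1) = r⁻¹ * ρ ^ n := by
      rw [Real.rpow_sub hr0, Real.rpow_one]
      have hdiv : (n : ℝ) / (L : ℝ) = (L : ℝ)⁻¹ * (n : ℝ) := by ring
      rw [hdiv, Real.rpow_mul hr0.le, Real.rpow_natCast]
      rw [div_eq_mul_inv]
      ring
    calc q ^ (n / L) ≤ r ^ (n / L) := h1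
      _ = r ^ (((n / L : ℕ)) : ℝ) := (Real.rpow_natCast r _).symm
      _ ≤ r ^ ((n : ℝ) / (L : ℝ) - 1) := h4
      _ = r⁻¹ * ρ ^ n := h5
  -- bound on each elementary bad event
  have hbadE : ∀ (n : ℕ) (x e : Fin d → ℤ), e ∈ unitVecs d →
      Q (badE d x e n) ≤ qE ^ (n / L) := by
    intro n x e he
    refine le_trans (measure_mono ?_) (spaced_bound d Q hQ hInd hLl he x (n / L))
    intro ω hω
    simp only [badE, Set.mem_iInter, Finset.mem_Icc] at hω ⊢
    rintro j ⟨hj1, hj2⟩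
    have hk1 : 1 ≤ j * L := by
      calc 1 = 1 * 1 := (one_mul 1).symm
        _ ≤ j * L := Nat.mul_le_mul hj1 hL1
    have hk2 : j * L ≤ n :=
      le_trans (Nat.mul_le_mul_right L hj2) (Nat.div_mul_le_self n L)
    exact hω (j * L) ⟨hk1, hk2⟩
  -- bound on the bad event at scale n
  have hbadB : ∀ n : ℕ, Q (badB d n) ≤
      ENNReal.ofReal (((((2 * n + 1) ^ d * (2 * d) : ℕ)) : ℝ) * (r⁻¹ * ρ ^ n)) := by
    intro n
    have h1 : Q (badB d n) ≤ ∑ x ∈ boxF d n, ∑ e ∈ unitFinset d, Q (badE d x e n) :=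
      (measure_biUnion_finset_le (μ := Q) (boxF d n) _).trans
        (Finset.sum_le_sum fun x _ => measure_biUnion_finset_le (μ := Q) (unitFinset d) _)
    have h2 : (∑ x ∈ boxF d n, ∑ e ∈ unitFinset d, Q (badE d x e n))
        ≤ ∑ x ∈ boxF d n, ∑ _e ∈ unitFinset d, qE ^ (n / L) := by
      refine Finset.sum_le_sum fun x _ => Finset.sum_le_sum fun e he => ?_
      exact hbadE n x e (mem_unitVecs_of_mem_unitFinset d he)
    have h3 : (∑ x ∈ boxF d n, ∑ _e ∈ unitFinset d, qE ^ (n / L))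
        = ((boxF d n).card : ℝ≥0∞) * (((unitFinset d).card : ℝ≥0∞) * qE ^ (n / L)) := by
      simp [Finset.sum_const, nsmul_eq_mul, mul_assoc]
    have h4 : ((boxF d n).card : ℝ≥0∞) * (((unitFinset d).card : ℝ≥0∞) * qE ^ (n / L))
        ≤ ((((2 * n + 1) ^ d * (2 * d) : ℕ)) : ℝ≥0∞) * qE ^ (n / L) := by
      rw [card_boxF]
      have hcards : ((unitFinset d).card : ℝ≥0∞) ≤ ((2 * d : ℕ) : ℝ≥0∞) := by
        exact_mod_cast card_unitFinset_le d
      calc (((2 * n + 1) ^ d : ℕ) : ℝ≥0∞) * (((unitFinset d).card : ℝ≥0∞) * qE ^ (n / L))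
          ≤ (((2 * n + 1) ^ d : ℕ) : ℝ≥0∞) * (((2 * d : ℕ) : ℝ≥0∞) * qE ^ (n / L)) := by
            refine mul_le_mul_right (mul_le_mul_left hcards _) _
        _ = ((((2 * n + 1) ^ d * (2 * d) : ℕ)) : ℝ≥0∞) * qE ^ (n / L) := by
            push_cast
            ring
    have h5 : ((((2 * n + 1) ^ d * (2 * d) : ℕ)) : ℝ≥0∞) * qE ^ (n / L)
        ≤ ENNReal.ofReal (((((2 * n + 1) ^ d * (2 * d) : ℕ)) : ℝ) * (r⁻¹ * ρ ^ n)) := by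
      rw [hofq, ← ENNReal.ofReal_pow hq0, ← ENNReal.ofReal_natCast,
        ← ENNReal.ofReal_mul (Nat.cast_nonneg _)]
      exact ENNReal.ofReal_le_ofReal
        (mul_le_mul_of_nonneg_left (hkey n) (Nat.cast_nonneg _))
    exact le_trans h1 (le_trans h2 (le_trans (le_of_eq h3) (le_trans h4 h5)))
  -- summability
  have hsum := summable_aux d L hr0 hr1 hL1
  have htsum : (∑' n : ℕ, Q (badB d n)) ≠ ⊤ := by
    refine ne_top_of_le_ne_top ?_ (ENNReal.tsum_le_tsum hbadB)
    rw [← ENNReal.ofReal_tsum_of_nonneg (fun n => ?_) hsum]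
    · exact ENNReal.ofReal_ne_top
    · have : (0 : ℝ) ≤ r⁻¹ * ρ ^ n := by positivity
      exact mul_nonneg (Nat.cast_nonneg _) this
  -- Borel–Cantelli
  have hlim : Q (Filter.limsup (fun n => badB d n) Filter.atTop) = 0 :=
    measure_limsup_atTop_eq_zero htsum
  refine ⟨Omega0 d ∩ (Filter.limsup (fun n => badB d n) Filter.atTop)ᶜ,
    Set.inter_subset_left, ?_, ?_⟩
  · rw [condP, cond_apply hOmeas]
    have hinter : Omega0 d ∩ (Omega0 d ∩ (Filter.limsup (fun n => badB d n) Filter.atTop)ᶜ)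
        = Omega0 d \ Filter.limsup (fun n => badB d n) Filter.atTop := by
      rw [← Set.inter_assoc, Set.inter_self, Set.diff_eq]
    rw [hinter, measure_diff_null hlim]
    exact ENNReal.inv_mul_cancel (ne_of_gt hQ.a1_pos) (measure_ne_top Q _)
  · rintro ω ⟨hω0, hωl⟩
    have hne : ω ∉ Filter.limsup (fun n => badB d n) Filter.atTop := hωl
    rw [Filter.limsup_eq_iInf_iSup_of_nat] at hne
    simp only [Set.iInf_eq_iInter, Set.iSup_eq_iUnion, Set.mem_iInter, Set.mem_iUnion,
      not_forall, not_exists] at hne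
    obtain ⟨N, hN⟩ := hne
    refine ⟨max N 1, le_max_right _ _, ?_⟩
    intro n hn x hx hxn e he
    have hnb : ω ∉ badB d n := hN n (le_trans (le_max_left _ _) hn)
    have hxbox : x ∈ boxF d n := by
      rw [boxF, Fintype.mem_piFinset]
      intro i
      rw [Finset.mem_Icc]
      have habs : (x i).natAbs ≤ n := by
        rw [← hxn, nrmInf]
        exact Finset.le_sup (f := fun i => (x i).natAbs) (Finset.mem_univ i)
      have : |x i| ≤ (n : ℤ) := by
        rw [Int.abs_eq_natAbs]
        exact_mod_cast habs
      exact abs_le.mp this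
    have heF : e ∈ unitFinset d := by
      obtain ⟨i, hi⟩ := he
      simp only [unitFinset, Finset.mem_union, Finset.mem_image, Finset.mem_univ, true_and]
      rcases hi with h | h
      · exact Or.inl ⟨i, h.symm⟩
      · exact Or.inr ⟨i, h.symm⟩
    have hnotE : ω ∉ badE d x e n := by
      intro hmem
      exact hnb (by
        simp only [badB, Set.mem_iUnion]
        exact ⟨x, hxbox, e, heF, hmem⟩)
    have hnall : ¬ ∀ k : ℕ, 1 ≤ k → k ≤ n → ω (x + (k : ℤ) • e) = false := by
      intro hall
      refine hnotE ?_
      simp only [badE, Set.mem_iInter, Finset.mem_Icc]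
      rintro k ⟨h1, h2⟩
      exact hall k h1 h2
    push_neg at hnall
    obtain ⟨k, h1, h2, h3⟩ := hnall
    refine ⟨k, h1, h2, ?_⟩
    revert h3
    cases ω (x + (k : ℤ) • e) <;> simp


end RWDPP
end

section
/- Boundedness of the walk (condition (B)): for P-a.e. ω there exists a positive integer N(ω) such that every P(ω)-nearest neighbor path (0 = x₀, x₁, …, x_n) starting at the origin satisfies |x₁|_∞ ≤ N(ω) and |x_n|_∞ ≤ 2^{n−1} N(ω) for all n ≥ 1. In particular, for P-a.e. ω and each n ≥ 0 there is a constant K(ω, n) with |X_n| ≤ K(ω, n), P_ω^0-almost surely. -/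
open MeasureTheory ProbabilityTheory Filter
open scoped ENNReal Topology

namespace RWDPP

attribute [local instance] Classical.propDecidable


/-! ### Auxiliary lemmas for condition (B) -/

section CondBAux

variable {d : ℕ}

lemma natAbs_le_nrmInf (x : Fin d → ℤ) (i : Fin d) : (x i).natAbs ≤ nrmInf d x :=
  Finset.le_sup (f := fun j => (x j).natAbs) (Finset.mem_univ i)

lemma nrmInf_add_le (x y : Fin d → ℤ) : nrmInf d (x + y) ≤ nrmInf d x + nrmInf d y := by
  refine Finset.sup_le fun i _ => ?_
  calc ((x + y) i).natAbs = (x i + y i).natAbs := rfl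
    _ ≤ (x i).natAbs + (y i).natAbs := Int.natAbs_add_le _ _
    _ ≤ _ := add_le_add (natAbs_le_nrmInf x i) (natAbs_le_nrmInf y i)

lemma nrmInf_zero : nrmInf d (0 : Fin d → ℤ) = 0 := by
  simp [nrmInf]

lemma nrmInf_smul_unit' {e : Fin d → ℤ} (he : e ∈ unitVecs d) (c : ℤ) :
    nrmInf d (c • e) = c.natAbs := by
  obtain ⟨i, hi | hi⟩ := he <;> subst hi
  · refine le_antisymm (Finset.sup_le fun j _ => ?_) ?_
    · by_cases h : j = i
      · subst h; simp [Pi.smul_apply, Pi.single_eq_same]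
      · simp [Pi.smul_apply, Pi.single_eq_of_ne h]
    · have h := natAbs_le_nrmInf (c • Pi.single i (1 : ℤ)) i
      simp only [Pi.smul_apply, Pi.single_eq_same, smul_eq_mul, mul_one] at h
      exact h
  · refine le_antisymm (Finset.sup_le fun j _ => ?_) ?_
    · by_cases h : j = i
      · subst h; simp [Pi.smul_apply, Pi.single_eq_same]
      · simp [Pi.smul_apply, Pi.single_eq_of_ne h]
    · have h := natAbs_le_nrmInf (c • Pi.single i (-1 : ℤ)) i
      simp only [Pi.smul_apply, Pi.single_eq_same, smul_eq_mul, mul_neg_one,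
        Int.natAbs_neg] at h
      exact h

lemma gamma_le {ω : Cfg d} {x e : Fin d → ℤ} {m k : ℕ} (hk1 : 1 ≤ k) (hkm : k ≤ m)
    (h : ω (x + (k : ℤ) • e) = true) : gamma d e (shift d x ω) ≤ m := by
  refine le_trans (Nat.sInf_le ?_) hkm
  exact ⟨hk1, by simpa [shift, add_comm] using h⟩

lemma nrmInf_nbr_le {ω : Cfg d} {x e : Fin d → ℤ} (he : e ∈ unitVecs d) {m : ℕ}
    (hγ : gamma d e (shift d x ω) ≤ m) : nrmInf d (nbr d ω x e) ≤ nrmInf d x + m := by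
  refine (nrmInf_add_le _ _).trans ?_
  rw [nrmInf_smul_unit' he]
  simpa using add_le_add_left hγ (nrmInf d x)

/-- The deterministic core of the argument: if all `γ`'s within reach are suitably
bounded then every nearest-neighbor path from the origin at most doubles its
sup-norm at each step. -/
lemma path_bound {ω : Cfg d} {N : ℕ} (hN : 1 ≤ N)
    (hgood : ∀ m, N ≤ m → ∀ x : Fin d → ℤ, nrmInf d x ≤ m → ∀ e ∈ unitVecs d,
        gamma d e (shift d x ω) ≤ m) :
    ∀ (n : ℕ) (p : Traj d), 1 ≤ n → p 0 = 0 → IsPath d ω p n →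
      nrmInf d (p 1) ≤ N ∧ nrmInf d (p n) ≤ 2 ^ (n - 1) * N := by
  intro n p hn hp0 hpath
  have key : ∀ k, 1 ≤ k → k ≤ n → nrmInf d (p k) ≤ 2 ^ (k - 1) * N := by
    intro k
    induction k with
    | zero => omega
    | succ k ih =>
      intro _ hkn
      rcases Nat.eq_or_lt_of_le (Nat.one_le_iff_ne_zero.mpr (Nat.succ_ne_zero k)) with h1 | h1
      · -- k + 1 = 1
        have hk0 : k = 0 := by omega
        subst hk0
        obtain ⟨e, he, hpe⟩ := hpath.2 1 le_rfl hkn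
        have hγ : gamma d e (shift d (p 0) ω) ≤ N := by
          refine hgood N le_rfl (p 0) ?_ e he
          rw [hp0, nrmInf_zero]; exact Nat.zero_le _
        have := nrmInf_nbr_le he hγ
        rw [hpe]
        simpa [hp0, nrmInf_zero] using this
      · -- 2 ≤ k + 1, so 1 ≤ k
        have hk1 : 1 ≤ k := by omega
        have hkn' : k ≤ n := by omega
        have hIH := ih hk1 hkn'
        set m := 2 ^ (k - 1) * N with hm
        have hNm : N ≤ m := by
          calc N = 1 * N := (one_mul N).symm
            _ ≤ 2 ^ (k - 1) * N := by
                exact Nat.mul_le_mul_right N (Nat.one_le_two_pow)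
        obtain ⟨e, he, hpe⟩ := hpath.2 (k + 1) (by omega) hkn
        have hk1' : (k + 1) - 1 = k := by omega
        rw [hk1'] at hpe
        have hγ : gamma d e (shift d (p k) ω) ≤ m := hgood m hNm (p k) hIH e he
        have hb := nrmInf_nbr_le he hγ
        rw [hpe]
        calc nrmInf d (nbr d ω (p k) e) ≤ nrmInf d (p k) + m := hb
          _ ≤ m + m := Nat.add_le_add_right hIH m
          _ = 2 ^ ((k + 1) - 1) * N := by
              rw [hm]
              have : (k + 1) - 1 = (k - 1) + 1 := by omega
              rw [this, pow_succ]
              ring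
  exact ⟨by simpa using key 1 le_rfl hn, key n hn le_rfl⟩

lemma abs_coord_le_nrm (x : Fin d → ℤ) (i : Fin d) : |(x i : ℝ)| ≤ nrm d x := by
  rw [nrm, EuclideanSpace.norm_eq]
  have h1 : |(x i : ℝ)| = Real.sqrt (‖toE d x i‖ ^ 2) := by
    rw [Real.sqrt_sq_eq_abs]
    simp [toE]
  rw [h1]
  refine Real.sqrt_le_sqrt ?_
  exact Finset.single_le_sum (f := fun j => ‖toE d x j‖ ^ 2)
    (fun j _ => sq_nonneg _) (Finset.mem_univ i)

lemma nrm_le_sqrt_mul (x : Fin d → ℤ) :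
    nrm d x ≤ Real.sqrt d * (nrmInf d x : ℝ) := by
  rw [nrm, EuclideanSpace.norm_eq]
  have hsum : ∑ j, ‖toE d x j‖ ^ 2 ≤ (d : ℝ) * (nrmInf d x : ℝ) ^ 2 := by
    calc ∑ j, ‖toE d x j‖ ^ 2 ≤ ∑ _j : Fin d, ((nrmInf d x : ℝ)) ^ 2 := by
          refine Finset.sum_le_sum fun j _ => ?_
          have h1 : ‖toE d x j‖ = ((x j).natAbs : ℝ) := by
            simp [toE, Real.norm_eq_abs, Int.abs_eq_natAbs, -Nat.cast_natAbs]
            push_cast [Nat.cast_natAbs]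
            simp
          rw [h1]
          have h2 : ((x j).natAbs : ℝ) ≤ (nrmInf d x : ℝ) :=
            Nat.cast_le.mpr (natAbs_le_nrmInf x j)
          exact pow_le_pow_left₀ (by positivity) h2 2
      _ = (d : ℝ) * (nrmInf d x : ℝ) ^ 2 := by
          simp [Finset.sum_const, Finset.card_univ]
  calc Real.sqrt (∑ j, ‖toE d x j‖ ^ 2) ≤ Real.sqrt ((d : ℝ) * (nrmInf d x : ℝ) ^ 2) :=
        Real.sqrt_le_sqrt hsum
    _ = Real.sqrt d * (nrmInf d x : ℝ) := by
        rw [Real.sqrt_mul (by positivity), Real.sqrt_sq (by positivity)]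

lemma nrm_zero : nrm d (0 : Fin d → ℤ) = 0 := by
  have : toE d (0 : Fin d → ℤ) = 0 := by
    ext i; simp [toE]
  simp [nrm, this]

lemma measurableSet_coordEq (y : Fin d → ℤ) (b : Bool) :
    MeasurableSet {ω : Cfg d | ω y = b} := by
  have h : {ω : Cfg d | ω y = b} = (fun ω : Cfg d => ω y) ⁻¹' {b} := by ext ω; simp
  rw [h]
  exact measurable_pi_apply y (measurableSet_singleton b)

lemma measurableSet_omega0 : MeasurableSet (Omega0 d) :=
  measurableSet_coordEq 0 true

/-- The event that all coordinates in `A` are `false` is `coordSigma A`-measurable. -/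
lemma measurableSet_allFalse {A : Set (Fin d → ℤ)} (hA : A.Countable) :
    MeasurableSet[coordSigma d A] {ω : Cfg d | ∀ a ∈ A, ω a = false} := by
  have : Countable A := hA.to_subtype
  rw [coordSigma]
  refine MeasurableSpace.measurableSet_comap.mpr
    ⟨{g : A → Bool | ∀ a, g a = false}, ?_, ?_⟩
  · have h : {g : A → Bool | ∀ a, g a = false}
        = ⋂ a : A, (fun g : A → Bool => g a) ⁻¹' {false} := by
      ext g; simp
    rw [h]
    exact MeasurableSet.iInter fun a => measurable_pi_apply a (measurableSet_singleton false)
  · ext ω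
    simp [Subtype.forall]

lemma measure_coordFalse (Q : Measure (Cfg d))
    (ha3 : ∀ y : Fin d → ℤ, MeasurePreserving (shift d y) Q Q) (y : Fin d → ℤ) :
    Q {ω : Cfg d | ω y = false} = Q {ω : Cfg d | ω 0 = false} := by
  have hpre : (shift d y) ⁻¹' {ω : Cfg d | ω 0 = false} = {ω : Cfg d | ω y = false} := by
    ext ω; simp [shift]
  rw [← hpre]
  exact (ha3 y).measure_preimage (measurableSet_coordEq 0 false).nullMeasurableSet

/-- The product rule for coordinates that are pairwise `ℓ`-separated. -/
lemma measure_iInter_false (Q : Measure (Cfg d)) [IsProbabilityMeasure Q] {ℓ : ℝ}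
    (ha2 : ∀ A B : Set (Fin d → ℤ),
      (∀ x ∈ A, ∀ y ∈ B, ℓ ≤ nrm d (x - y)) →
        Indep (coordSigma d A) (coordSigma d B) Q)
    (ha3 : ∀ y : Fin d → ℤ, MeasurePreserving (shift d y) Q Q) :
    ∀ (k : ℕ) (y : Fin k → (Fin d → ℤ)),
      (∀ i j, i ≠ j → ℓ ≤ nrm d (y i - y j)) →
      Q {ω : Cfg d | ∀ i, ω (y i) = false} = Q {ω : Cfg d | ω 0 = false} ^ k := by
  intro k
  induction k with
  | zero =>
    intro y _
    have : {ω : Cfg d | ∀ i : Fin 0, ω (y i) = false} = Set.univ := by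
      ext ω; simp
    simp [this]
  | succ k ih =>
    intro y hy
    set A : Set (Fin d → ℤ) := {y 0} with hA
    set B : Set (Fin d → ℤ) := Set.range (fun i : Fin k => y i.succ) with hB
    have hind : Indep (coordSigma d A) (coordSigma d B) Q := by
      refine ha2 A B ?_
      rintro x hx z ⟨i, rfl⟩
      rw [hA, Set.mem_singleton_iff] at hx
      subst hx
      exact hy 0 i.succ (Fin.succ_ne_zero i).symm
    have hs : MeasurableSet[coordSigma d A] {ω : Cfg d | ∀ a ∈ A, ω a = false} :=
      measurableSet_allFalse (Set.countable_singleton _)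
    have ht : MeasurableSet[coordSigma d B] {ω : Cfg d | ∀ a ∈ B, ω a = false} :=
      measurableSet_allFalse (Set.countable_range _)
    have hmul := (Indep_iff _ _ Q).mp hind _ _ hs ht
    have hAeq : {ω : Cfg d | ∀ a ∈ A, ω a = false} = {ω : Cfg d | ω (y 0) = false} := by
      ext ω; simp [hA]
    have hBeq : {ω : Cfg d | ∀ a ∈ B, ω a = false}
        = {ω : Cfg d | ∀ i : Fin k, ω (y i.succ) = false} := by
      ext ω; simp [hB]
    have hinter : {ω : Cfg d | ∀ a ∈ A, ω a = false} ∩ {ω : Cfg d | ∀ a ∈ B, ω a = false}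
        = {ω : Cfg d | ∀ i : Fin (k + 1), ω (y i) = false} := by
      rw [hAeq, hBeq]
      ext ω
      simp only [Set.mem_inter_iff, Set.mem_setOf_eq]
      constructor
      · rintro ⟨h0, hsucc⟩ i
        refine Fin.cases h0 hsucc i
      · intro h
        exact ⟨h 0, fun i => h i.succ⟩
    rw [hinter] at hmul
    rw [hmul, hAeq]
    rw [hBeq, ih (fun i => y i.succ) (fun i j hij => hy i.succ j.succ (by
      simpa using hij))]
    rw [measure_coordFalse Q ha3 (y 0), pow_succ]
    ring

end CondBAux

/-- The event that the segment `{x + k e : 1 ≤ k ≤ m}` carries no point of the process. -/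
def badSeg (d : ℕ) (x e : Fin d → ℤ) (m : ℕ) : Set (Cfg d) :=
  {ω | ∀ k : ℕ, 1 ≤ k → k ≤ m → ω (x + (k : ℤ) • e) = false}

/-- The union of the `badSeg` events over the box of radius `m` and all directions. -/
def badBox (d : ℕ) (m : ℕ) : Set (Cfg d) :=
  ⋃ x ∈ Finset.Icc (fun _ : Fin d => -(m : ℤ)) (fun _ : Fin d => (m : ℤ)),
    ⋃ e ∈ unitFinset d, badSeg d x e m

section CondBAux2

variable {d : ℕ}

lemma mem_unitFinset_iff {e : Fin d → ℤ} : e ∈ unitFinset d ↔ e ∈ unitVecs d := by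
  simp only [unitFinset, Finset.mem_union, Finset.mem_image, Finset.mem_univ, true_and,
    unitVecs, Set.mem_setOf_eq]
  constructor
  · rintro (⟨i, rfl⟩ | ⟨i, rfl⟩)
    · exact ⟨i, Or.inl rfl⟩
    · exact ⟨i, Or.inr rfl⟩
  · rintro ⟨i, rfl | rfl⟩
    · exact Or.inl ⟨i, rfl⟩
    · exact Or.inr ⟨i, rfl⟩

lemma exists_abs_unit {e : Fin d → ℤ} (he : e ∈ unitVecs d) : ∃ i₀, |e i₀| = 1 := by
  obtain ⟨i, h | h⟩ := he <;> subst h <;> exact ⟨i, by simp [Pi.single_eq_same]⟩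

lemma measure_badSeg_le (Q : Measure (Cfg d)) [IsProbabilityMeasure Q] {ℓ : ℝ}
    (ha2 : ∀ A B : Set (Fin d → ℤ),
      (∀ x ∈ A, ∀ y ∈ B, ℓ ≤ nrm d (x - y)) →
        Indep (coordSigma d A) (coordSigma d B) Q)
    (ha3 : ∀ y : Fin d → ℤ, MeasurePreserving (shift d y) Q Q)
    {L : ℕ} (hL : 1 ≤ L) (hℓL : ℓ ≤ (L : ℝ))
    (x : Fin d → ℤ) {e : Fin d → ℤ} (he : e ∈ unitVecs d) (m : ℕ) :
    Q (badSeg d x e m) ≤ Q {ω : Cfg d | ω 0 = false} ^ (m / L) := by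
  set y : Fin (m / L) → (Fin d → ℤ) :=
    fun j => x + ((((j : ℕ) + 1) * L : ℕ) : ℤ) • e with hy
  have hsub : badSeg d x e m ⊆ {ω : Cfg d | ∀ j, ω (y j) = false} := by
    intro ω hω
    intro j
    refine hω (((j : ℕ) + 1) * L) ?_ ?_
    · exact Nat.one_le_iff_ne_zero.mpr (by positivity)
    · calc ((j : ℕ) + 1) * L ≤ (m / L) * L :=
            Nat.mul_le_mul_right L (Nat.succ_le_of_lt j.isLt)
        _ ≤ m := Nat.div_mul_le_self m L
  refine le_trans (measure_mono hsub) ?_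
  have hsep : ∀ i j : Fin (m / L), i ≠ j → ℓ ≤ nrm d (y i - y j) := by
    intro i j hij
    obtain ⟨i₀, hi₀⟩ := exists_abs_unit he
    have hyij : y i - y j = ((((i : ℕ) : ℤ) - ((j : ℕ) : ℤ)) * L) • e := by
      simp only [hy]
      rw [add_sub_add_left_eq_sub, ← sub_smul]
      congr 1
      push_cast
      ring
    have habs : |(y i - y j) i₀| = |(((i : ℕ) : ℤ) - ((j : ℕ) : ℤ))| * L := by
      rw [hyij]
      simp [Pi.smul_apply, smul_eq_mul, abs_mul, hi₀, Int.abs_natCast]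
    have hne : (((i : ℕ) : ℤ) - ((j : ℕ) : ℤ)) ≠ 0 := by
      intro h
      apply hij
      have : ((i : ℕ) : ℤ) = ((j : ℕ) : ℤ) := by linarith [sub_eq_zero.mp h]
      exact Fin.ext (by exact_mod_cast this)
    have h1 : (1 : ℤ) ≤ |(((i : ℕ) : ℤ) - ((j : ℕ) : ℤ))| := Int.one_le_abs hne
    have hLle : (L : ℤ) ≤ |(y i - y j) i₀| := by
      rw [habs]
      nlinarith [Int.ofNat_nonneg L]
    calc ℓ ≤ (L : ℝ) := hℓL
      _ ≤ |((y i - y j) i₀ : ℝ)| := by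
          rw [← Int.cast_abs]
          exact_mod_cast hLle
      _ ≤ nrm d (y i - y j) := abs_coord_le_nrm _ i₀
  rw [measure_iInter_false Q ha2 ha3 (m / L) y hsep]

lemma measure_badBox_le (Q : Measure (Cfg d)) [IsProbabilityMeasure Q] {ℓ : ℝ}
    (ha2 : ∀ A B : Set (Fin d → ℤ),
      (∀ x ∈ A, ∀ y ∈ B, ℓ ≤ nrm d (x - y)) →
        Indep (coordSigma d A) (coordSigma d B) Q)
    (ha3 : ∀ y : Fin d → ℤ, MeasurePreserving (shift d y) Q Q)
    {L : ℕ} (hL : 1 ≤ L) (hℓL : ℓ ≤ (L : ℝ)) (m : ℕ) :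
    Q (badBox d m) ≤ (((2 * m + 1) ^ d * (2 * d) : ℕ) : ℝ≥0∞)
      * Q {ω : Cfg d | ω 0 = false} ^ (m / L) := by
  set q := Q {ω : Cfg d | ω 0 = false} with hq
  set S : Finset (Fin d → ℤ) :=
    Finset.Icc (fun _ : Fin d => -(m : ℤ)) (fun _ : Fin d => (m : ℤ)) with hS
  have hcardS : S.card = (2 * m + 1) ^ d := by
    rw [hS, Pi.card_Icc]
    have h1 : (Finset.Icc (-(m : ℤ)) (m : ℤ)).card = 2 * m + 1 := by
      rw [Int.card_Icc]
      omega
    simp [h1]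
  have hcardU : (unitFinset d).card ≤ 2 * d := by
    refine le_trans (Finset.card_union_le _ _) ?_
    have h1 := Finset.card_image_le (s := (Finset.univ : Finset (Fin d)))
      (f := fun i : Fin d => (Pi.single i 1 : Fin d → ℤ))
    have h2 := Finset.card_image_le (s := (Finset.univ : Finset (Fin d)))
      (f := fun i : Fin d => (Pi.single i (-1) : Fin d → ℤ))
    simp only [Finset.card_univ, Fintype.card_fin] at h1 h2
    omega
  calc Q (badBox d m) ≤ ∑ x ∈ S, Q (⋃ e ∈ unitFinset d, badSeg d x e m) :=
        measure_biUnion_finset_le S _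
    _ ≤ ∑ x ∈ S, ∑ e ∈ unitFinset d, Q (badSeg d x e m) :=
        Finset.sum_le_sum fun x _ => measure_biUnion_finset_le _ _
    _ ≤ ∑ _x ∈ S, ∑ _e ∈ unitFinset d, q ^ (m / L) := by
        refine Finset.sum_le_sum fun x _ => Finset.sum_le_sum fun e heu => ?_
        exact measure_badSeg_le Q ha2 ha3 hL hℓL x (mem_unitFinset_iff.mp heu) m
    _ = ((S.card * (unitFinset d).card : ℕ) : ℝ≥0∞) * q ^ (m / L) := by
        simp [Finset.sum_const, mul_assoc]
    _ ≤ (((2 * m + 1) ^ d * (2 * d) : ℕ) : ℝ≥0∞) * q ^ (m / L) := by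
        refine mul_le_mul_left ?_ _
        refine Nat.cast_le.mpr ?_
        rw [hcardS]
        exact Nat.mul_le_mul_left _ hcardU

end CondBAux2

section CondBAux3

variable {d : ℕ}

lemma summable_bound {q₀ : ℝ} (hq0 : 0 < q₀) (hq1 : q₀ < 1) {L : ℕ} (hL : 1 ≤ L) (d : ℕ) :
    Summable (fun m : ℕ => (((2 * m + 1) ^ d * (2 * d) : ℕ) : ℝ) * q₀ ^ (m / L)) := by
  set ρ : ℝ := q₀ ^ ((L : ℝ)⁻¹) with hρ
  have hρpos : 0 < ρ := Real.rpow_pos_of_pos hq0 _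
  have hρ1 : ρ < 1 := Real.rpow_lt_one hq0.le hq1 (by positivity)
  have hρL : ρ ^ L = q₀ := Real.rpow_inv_natCast_pow hq0.le (by omega)
  have hkey : ∀ m : ℕ, q₀ ^ (m / L) ≤ ρ ^ m / q₀ := by
    intro m
    have hm : m ≤ (m / L + 1) * L :=
      le_of_lt ((Nat.div_lt_iff_lt_mul (by omega)).mp (Nat.lt_succ_self _))
    have h1 : ρ ^ ((m / L + 1) * L) ≤ ρ ^ m :=
      pow_le_pow_of_le_one hρpos.le hρ1.le hm
    have h2 : ρ ^ ((m / L + 1) * L) = q₀ ^ (m / L) * q₀ := by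
      rw [mul_comm (m / L + 1) L, pow_mul, hρL, pow_succ]
    rw [h2] at h1
    calc q₀ ^ (m / L) = (q₀ ^ (m / L) * q₀) / q₀ := by field_simp
      _ ≤ ρ ^ m / q₀ := by
          exact div_le_div_of_nonneg_right h1 hq0.le
  have hsum : Summable (fun m : ℕ => ((m : ℝ) + 1) ^ d * ρ ^ m) := by
    have h0 : Summable (fun n : ℕ => (n : ℝ) ^ d * ρ ^ n) :=
      summable_pow_mul_geometric_of_norm_lt_one d
        (by rwa [Real.norm_eq_abs, abs_of_pos hρpos])
    have h1 : Summable (fun m : ℕ => (((m + 1 : ℕ)) : ℝ) ^ d * ρ ^ (m + 1)) :=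
      h0.comp_injective Nat.succ_injective
    have h2 := h1.mul_left ρ⁻¹
    refine h2.congr fun m => ?_
    push_cast
    field_simp
    ring
  refine Summable.of_nonneg_of_le (fun m => by positivity) (fun m => ?_)
    (hsum.mul_left ((3 : ℝ) ^ d * (2 * d) / q₀))
  have hb1 : (((2 * m + 1) : ℕ) : ℝ) ^ d ≤ 3 ^ d * ((m : ℝ) + 1) ^ d := by
    rw [← mul_pow]
    refine pow_le_pow_left₀ (by positivity) ?_ d
    push_cast
    linarith
  have hstep : (((2 * m + 1) ^ d * (2 * d) : ℕ) : ℝ) * q₀ ^ (m / L)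
      ≤ (3 ^ d * ((m : ℝ) + 1) ^ d * (2 * d)) * (ρ ^ m / q₀) := by
    push_cast
    have h0 : (0 : ℝ) ≤ ((2 * (m : ℝ) + 1)) ^ d * (2 * d) := by positivity
    refine mul_le_mul ?_ (hkey m) (by positivity) (by positivity)
    have : (((2 * m + 1) : ℕ) : ℝ) = 2 * (m : ℝ) + 1 := by push_cast; ring
    calc (2 * (m : ℝ) + 1) ^ d * (2 * d) ≤ (3 ^ d * ((m : ℝ) + 1) ^ d) * (2 * d) := by
          refine mul_le_mul_of_nonneg_right ?_ (by positivity)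
          rw [← this]
          exact hb1
      _ = 3 ^ d * ((m : ℝ) + 1) ^ d * (2 * d) := rfl
  refine hstep.trans (le_of_eq ?_)
  ring

/-- Extension of a finite tuple to an infinite trajectory. -/
noncomputable def extTup (d n : ℕ) (v : Fin (n + 1) → (Fin d → ℤ)) : Traj d :=
  fun k => if h : k ≤ n then v ⟨k, Nat.lt_succ_of_le h⟩ else 0

/-- The cylinder determined by a finite tuple. -/
def cylSet (d n : ℕ) (v : Fin (n + 1) → (Fin d → ℤ)) : Set (Traj d) :=
  {p | ∀ k ≤ n, p k = extTup d n v k}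

lemma quenched_bound {ω : Cfg d} (hω0 : ω 0 = true) {μ : (Fin d → ℤ) → Measure (Traj d)}
    (hμ : IsQuenchedLaw d ω μ) (n : ℕ) (K : ℝ)
    (hgood : ∀ p : Traj d, p 0 = 0 → (∀ k, k < n → p (k + 1) ∈ nbrs d ω (p k)) →
      nrm d (p n) ≤ K) :
    μ 0 {p : Traj d | nrm d (p n) ≤ K} = 1 := by
  obtain ⟨hprob, hcyl⟩ := hμ
  haveI := hprob 0
  set Good : Set (Traj d) :=
    {p | p 0 = 0 ∧ ∀ k, k < n → p (k + 1) ∈ nbrs d ω (p k)} with hGood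
  have hcover : Goodᶜ ⊆ ⋃ v : Fin (n + 1) → (Fin d → ℤ), (cylSet d n v ∩ Goodᶜ) := by
    intro p hp
    refine Set.mem_iUnion.mpr ⟨fun k => p (k : ℕ), ?_, hp⟩
    intro k hk
    simp only [extTup, dif_pos hk]
  have hcylnull : ∀ v : Fin (n + 1) → (Fin d → ℤ),
      (cylSet d n v ∩ Goodᶜ).Nonempty → μ 0 (cylSet d n v) = 0 := by
    rintro v ⟨p, hpC, hpB⟩
    have hext : ¬ (extTup d n v 0 = 0 ∧ ∀ k, k < n →
        extTup d n v (k + 1) ∈ nbrs d ω (extTup d n v k)) := by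
      intro hg
      apply hpB
      refine ⟨?_, ?_⟩
      · rw [hpC 0 (Nat.zero_le n)]; exact hg.1
      · intro k hk
        rw [hpC (k + 1) hk, hpC k (le_of_lt (Nat.lt_of_lt_of_le hk (Nat.le_refl n)))]
        exact hg.2 k hk
    have hval := hcyl 0 hω0 n (extTup d n v)
    have hset : cylSet d n v = {p : Traj d | ∀ k ≤ n, p k = extTup d n v k} := rfl
    rw [hset, hval]
    rcases not_and_or.mp hext with h0 | hsteps
    · rw [if_neg h0, zero_mul]
    · push_neg at hsteps
      obtain ⟨k, hk, hknot⟩ := hsteps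
      have hz : ∏ j ∈ Finset.range n,
          ENNReal.ofReal (stepP d ω (extTup d n v j) (extTup d n v (j + 1))) = 0 :=
        Finset.prod_eq_zero (Finset.mem_range.mpr hk) (by simp [stepP, hknot])
      rw [hz, mul_zero]
  have hbadnull : μ 0 Goodᶜ = 0 := by
    have hle : μ 0 Goodᶜ ≤ ∑' v : Fin (n + 1) → (Fin d → ℤ), μ 0 (cylSet d n v ∩ Goodᶜ) :=
      le_trans (measure_mono hcover) (measure_iUnion_le _)
    have hz : ∀ v : Fin (n + 1) → (Fin d → ℤ), μ 0 (cylSet d n v ∩ Goodᶜ) = 0 := by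
      intro v
      by_cases hne : (cylSet d n v ∩ Goodᶜ).Nonempty
      · exact le_antisymm
          (le_trans (measure_mono Set.inter_subset_left) (le_of_eq (hcylnull v hne)))
          (zero_le)
      · rw [Set.not_nonempty_iff_eq_empty.mp hne]; exact measure_empty
    simp only [hz, tsum_zero, nonpos_iff_eq_zero] at hle
    exact hle
  have hsub : Good ⊆ {p : Traj d | nrm d (p n) ≤ K} :=
    fun p hp => hgood p hp.1 hp.2
  have h1 : (1 : ℝ≥0∞) ≤ μ 0 {p : Traj d | nrm d (p n) ≤ K} := by
    have huniv : μ 0 Set.univ = 1 := measure_univ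
    have hchain : μ 0 Set.univ ≤ μ 0 {p : Traj d | nrm d (p n) ≤ K} + μ 0 Goodᶜ := by
      calc μ 0 Set.univ = μ 0 (Good ∪ Goodᶜ) := by rw [Set.union_compl_self]
        _ ≤ μ 0 Good + μ 0 Goodᶜ := measure_union_le _ _
        _ ≤ μ 0 {p : Traj d | nrm d (p n) ≤ K} + μ 0 Goodᶜ :=
            add_le_add_left (measure_mono hsub) _
    rwa [huniv, hbadnull, add_zero] at hchain
  exact le_antisymm prob_le_one h1

end CondBAux3

/-- **condition (B).** For `P`-a.e. `ω` there is `N(ω) ≥ 1` such that every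
`𝒫(ω)`-nearest neighbor path `(0 = x₀, x₁, …, x_n)` started at the origin satisfies
`|x₁|_∞ ≤ N(ω)` and `|x_n|_∞ ≤ 2^(n-1) N(ω)` for all `n ≥ 1`.  In particular, for each
`n ≥ 0` there is a constant `K(ω, n)` with `|X_n| ≤ K(ω, n)`, `P_ω^0`-a.s. -/
theorem condition_B (d : ℕ) (hd : 1 ≤ d)
    (Q : Measure (Cfg d)) (hQ : Assumptions d Q) :
    ∀ᵐ ω ∂condP d Q, ∃ N : ℕ, 1 ≤ N ∧
      (∀ (n : ℕ) (p : Traj d), 1 ≤ n → p 0 = 0 → IsPath d ω p n →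
        nrmInf d (p 1) ≤ N ∧ nrmInf d (p n) ≤ 2 ^ (n - 1) * N) ∧
      ∀ μ : (Fin d → ℤ) → Measure (Traj d), IsQuenchedLaw d ω μ →
        ∀ n : ℕ, ∃ K : ℝ, μ 0 {p | nrm d (p n) ≤ K} = 1 := by
  obtain ⟨ℓ, hℓpos, ha2⟩ := hQ.a2
  have ha3 := hQ.a3
  haveI := hQ.prob
  -- the separation scale
  set L : ℕ := max 1 ⌈ℓ⌉₊ with hLdef
  have hL : 1 ≤ L := le_max_left _ _
  have hℓL : ℓ ≤ (L : ℝ) := by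
    refine le_trans (Nat.le_ceil ℓ) ?_
    exact_mod_cast le_max_right 1 ⌈ℓ⌉₊
  -- the probability that a fixed site is vacant
  set q : ℝ≥0∞ := Q {ω : Cfg d | ω 0 = false} with hqdef
  have hOc : {ω : Cfg d | ω 0 = false} = (Omega0 d)ᶜ := by
    ext ω
    simp [Omega0, Bool.not_eq_true]
  have hqeq : q = 1 - Q (Omega0 d) := by
    rw [hqdef, hOc, measure_compl measurableSet_omega0 (measure_ne_top _ _),
      measure_univ]
  have hqlt : q < 1 := by
    rw [hqeq]
    exact ENNReal.sub_lt_self ENNReal.one_ne_top one_ne_zero (ne_of_gt hQ.a1_pos)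
  have hqpos : 0 < q := by
    rw [hqeq]
    exact tsub_pos_iff_lt.mpr hQ.a1_lt
  have hqne : q ≠ ⊤ := by rw [hqdef]; exact measure_ne_top _ _
  set q₀ : ℝ := q.toReal with hq₀def
  have hq₀pos : 0 < q₀ := ENNReal.toReal_pos (ne_of_gt hqpos) hqne
  have hq₀lt : q₀ < 1 := by
    have := (ENNReal.toReal_lt_toReal hqne ENNReal.one_ne_top).mpr hqlt
    simpa using this
  have hofq : q = ENNReal.ofReal q₀ := (ENNReal.ofReal_toReal hqne).symm
  -- Borel–Cantelli
  have hsumne : ∑' m : ℕ, Q (badBox d m) ≠ ⊤ := by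
    have hb : ∀ m : ℕ, Q (badBox d m)
        ≤ ENNReal.ofReal ((((2 * m + 1) ^ d * (2 * d) : ℕ) : ℝ) * q₀ ^ (m / L)) := by
      intro m
      refine le_trans (measure_badBox_le Q ha2 ha3 hL hℓL m) (le_of_eq ?_)
      rw [ENNReal.ofReal_mul (by positivity), ENNReal.ofReal_natCast,
        ENNReal.ofReal_pow hq₀pos.le, ← hofq, hqdef]
    refine ne_top_of_le_ne_top ?_ (ENNReal.tsum_le_tsum hb)
    rw [← ENNReal.ofReal_tsum_of_nonneg (fun m => by positivity)
      (summable_bound hq₀pos hq₀lt hL d)]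
    exact ENNReal.ofReal_ne_top
  have hlimsup : Q (limsup (fun m : ℕ => badBox d m) atTop) = 0 :=
    measure_limsup_atTop_eq_zero hsumne
  -- conditional null sets
  have hc1 : condP d Q ((Omega0 d)ᶜ) = 0 := by
    rw [condP, cond_apply measurableSet_omega0 Q]
    simp [Set.inter_compl_self]
  have hc2 : condP d Q (limsup (fun m : ℕ => badBox d m) atTop) = 0 := by
    rw [condP, cond_apply measurableSet_omega0 Q,
      measure_inter_null_of_null_right _ hlimsup, mul_zero]
  have hae : ∀ᵐ ω ∂condP d Q,
      ω ∈ Omega0 d ∧ ω ∉ limsup (fun m : ℕ => badBox d m) atTop := by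
    have h0 : condP d Q ((Omega0 d)ᶜ ∪ limsup (fun m : ℕ => badBox d m) atTop) = 0 :=
      measure_union_null hc1 hc2
    filter_upwards [(compl_mem_ae_iff).mpr h0] with ω hω
    simp only [Set.mem_compl_iff, Set.mem_union, not_or] at hω
    exact ⟨not_not.mp (fun h => hω.1 h), hω.2⟩
  filter_upwards [hae] with ω hω
  have hω0 : ω 0 = true := hω.1
  obtain ⟨m₀, hm₀⟩ : ∃ m₀ : ℕ, ∀ m, m₀ ≤ m → ω ∉ badBox d m := by
    have hlim := hω.2
    rw [limsup_eq_iInf_iSup_of_nat] at hlim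
    simp only [Set.iInf_eq_iInter, Set.iSup_eq_iUnion, Set.mem_iInter, Set.mem_iUnion,
      not_forall, not_exists, ge_iff_le] at hlim
    obtain ⟨n, hn⟩ := hlim
    exact ⟨n, fun m hm => hn m hm⟩
  set N : ℕ := max m₀ 1 with hNdef
  have hN1 : 1 ≤ N := le_max_right _ _
  have hgood : ∀ m, N ≤ m → ∀ x : Fin d → ℤ, nrmInf d x ≤ m → ∀ e ∈ unitVecs d,
      gamma d e (shift d x ω) ≤ m := by
    intro m hm x hx e he
    have hnotbad : ω ∉ badSeg d x e m := by
      intro hbad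
      apply hm₀ m (le_trans (le_max_left m₀ 1) hm)
      have hxmem : x ∈ Finset.Icc (fun _ : Fin d => -(m : ℤ)) (fun _ : Fin d => (m : ℤ)) := by
        simp only [Finset.mem_Icc, Pi.le_def]
        constructor <;> · intro i
                          have h2 : (x i).natAbs ≤ m := le_trans (natAbs_le_nrmInf x i) hx
                          omega
      exact Set.mem_iUnion₂.mpr ⟨x, hxmem,
        Set.mem_iUnion₂.mpr ⟨e, mem_unitFinset_iff.mpr he, hbad⟩⟩
    simp only [badSeg, Set.mem_setOf_eq, not_forall, Bool.not_eq_false] at hnotbad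
    obtain ⟨k, hk1, hkm, htrue⟩ := hnotbad
    exact gamma_le hk1 hkm htrue
  have hpaths := path_bound hN1 hgood
  refine ⟨N, hN1, fun n p hn hp0 hpath => hpaths n p hn hp0 hpath, ?_⟩
  intro μ hμ n
  refine ⟨Real.sqrt d * ((2 ^ n * N : ℕ) : ℝ), ?_⟩
  refine quenched_bound hω0 hμ n _ ?_
  intro p hp0 hsteps
  rcases Nat.eq_zero_or_pos n with rfl | hn
  · rw [hp0, nrm_zero]
    positivity
  · have hpath : IsPath d ω p n := by
      refine ⟨by rw [hp0]; exact hω0, ?_⟩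
      intro k hk1 hkn
      have h1 : k - 1 < n := by omega
      have h2 : (k - 1) + 1 = k := by omega
      have := hsteps (k - 1) h1
      rwa [h2] at this
    have hbd := (hpaths n p hn hp0 hpath).2
    calc nrm d (p n) ≤ Real.sqrt d * (nrmInf d (p n) : ℝ) := nrm_le_sqrt_mul _
      _ ≤ Real.sqrt d * ((2 ^ n * N : ℕ) : ℝ) := by
          refine mul_le_mul_of_nonneg_left ?_ (Real.sqrt_nonneg _)
          refine Nat.cast_le.mpr (le_trans hbd ?_)
          exact Nat.mul_le_mul_right N (Nat.pow_le_pow_right (by norm_num) (Nat.sub_le n 1))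

end RWDPP
end
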